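/- arXiv:2503.18643 — 5 statements merged into one kernel-verified Lean document; each statement's English description precedes it below -/
import Mathlib

section
/- Let A be a commutative ring with the trivial norm, and let x be a multiplicative seminorm on A with x(a) ≤ 1 for all a. Then x(a+b) ≤ max(x(a), x(b)) for all a,b ∈ A; i.e. every bounded multiplicative seminorm on a trivially normed ring is non-Archimedean. -/
open Filter Finset

/-- Every multiplicative seminorm on a trivially normed commutative ring that is
bounded by the trivial norm is non-Archimedean:
`x(a+b) ≤ max(x a, x b)`. -/
theorem stmt10 {A : Type*} [CommRing A] (x : A → ℝ)
    (hnn : ∀ a : A, 0 ≤ x a)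
    (h0 : x 0 = 0) (h1 : x 1 = 1)
    (hmul : ∀ a b : A, x (a * b) = x a * x b)
    (hadd : ∀ a b : A, x (a + b) ≤ x a + x b)
    (hbd : ∀ a : A, x a ≤ 1) :
    ∀ a b : A, x (a + b) ≤ max (x a) (x b) := by
  intro a b
  set M := max (x a) (x b) with hM
  have hM0 : 0 ≤ M := le_max_of_le_left (hnn a)
  have hpow : ∀ (c : A) (n : ℕ), x (c ^ n) = x c ^ n := by
    intro c n
    induction n with
    | zero => simpa using h1
    | succ n ih => rw [pow_succ, pow_succ, hmul, ih]
  -- subadditivity over finite sums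
  have hsum : ∀ (s : Finset ℕ) (f : ℕ → A), x (∑ i ∈ s, f i) ≤ ∑ i ∈ s, x (f i) := by
    intro s f
    induction s using Finset.induction with
    | empty => simpa using h0.le
    | @insert j t hi ih =>
      rw [Finset.sum_insert hi, Finset.sum_insert hi]
      exact (hadd _ _).trans (by linarith)
  -- key estimate
  have key : ∀ n : ℕ, x (a + b) ^ n ≤ (n + 1 : ℝ) * M ^ n := by
    intro n
    have h1' : x ((a + b) ^ n) ≤ ∑ i ∈ range (n + 1), x (a ^ i * b ^ (n - i) * (n.choose i : A)) := by
      rw [add_pow]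
      exact hsum _ _
    have h2 : ∀ i ∈ range (n + 1), x (a ^ i * b ^ (n - i) * (n.choose i : A)) ≤ M ^ n := by
      intro i hi
      rw [Finset.mem_range] at hi
      have : x (a ^ i * b ^ (n - i) * (n.choose i : A))
          = x a ^ i * x b ^ (n - i) * x ((n.choose i : A)) := by
        rw [hmul, hmul, hpow, hpow]
      rw [this]
      have hxa : x a ^ i ≤ M ^ i := pow_le_pow_left₀ (hnn a) (le_max_left _ _) i
      have hxb : x b ^ (n - i) ≤ M ^ (n - i) := pow_le_pow_left₀ (hnn b) (le_max_right _ _) _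
      calc x a ^ i * x b ^ (n - i) * x ((n.choose i : A))
          ≤ M ^ i * M ^ (n - i) * 1 := by
            exact mul_le_mul (mul_le_mul hxa hxb (pow_nonneg (hnn b) _) (pow_nonneg hM0 _))
              (hbd _) (hnn _) (mul_nonneg (pow_nonneg hM0 _) (pow_nonneg hM0 _))
        _ = M ^ (i + (n - i)) := by rw [mul_one, pow_add]
        _ = M ^ n := by rw [Nat.add_sub_cancel' (by omega)]
    calc x (a + b) ^ n = x ((a + b) ^ n) := (hpow _ _).symm
      _ ≤ ∑ i ∈ range (n + 1), x (a ^ i * b ^ (n - i) * (n.choose i : A)) := h1'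
      _ ≤ ∑ _i ∈ range (n + 1), M ^ n := Finset.sum_le_sum h2
      _ = (n + 1 : ℝ) * M ^ n := by
          rw [Finset.sum_const, Finset.card_range, nsmul_eq_mul]; push_cast; ring
  -- conclude
  by_contra hlt
  push_neg at hlt
  set c := x (a + b) with hc
  have hc0 : 0 < c := lt_of_le_of_lt hM0 hlt
  rcases eq_or_lt_of_le hM0 with hMz | hMpos
  · -- M = 0
    have := key 1
    rw [← hMz] at this
    simp at this
    nlinarith
  · set r := M / c with hr
    have hr0 : 0 ≤ r := div_nonneg hM0 hc0.le
    have hr1 : r < 1 := (div_lt_one hc0).mpr hlt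
    have hineq : ∀ n : ℕ, (1 : ℝ) ≤ (n + 1 : ℝ) * r ^ n := by
      intro n
      have h := key n
      have hcn : 0 < c ^ n := pow_pos hc0 n
      rw [hr, div_pow]
      rw [← sub_nonneg] at h ⊢
      have : (n + 1 : ℝ) * (M ^ n / c ^ n) - 1 = ((n + 1 : ℝ) * M ^ n - c ^ n) / c ^ n := by
        field_simp
      rw [this]
      exact div_nonneg (by linarith) hcn.le
    have htend : Tendsto (fun n : ℕ => (n + 1 : ℝ) * r ^ n) atTop (nhds 0) := by
      have h1t := tendsto_self_mul_const_pow_of_lt_one hr0 hr1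
      have h2t := tendsto_pow_atTop_nhds_zero_of_lt_one hr0 hr1
      have := h1t.add h2t
      simpa [add_mul] using this
    have : ∀ᶠ n : ℕ in atTop, (n + 1 : ℝ) * r ^ n < 1 :=
      htend.eventually_lt_const one_pos
    obtain ⟨n, hn⟩ := this.exists
    exact absurd (hineq n) (not_le.mpr hn)
end

section
/- Consider the affine line over a field k, with the trivially valued field k₀. For r > 0, let η_r be the seminorm on k[T] given by η_r(Σ aᵢTⁱ) = max_i (|aᵢ|₀ · rⁱ). Then η_r is a multiplicative seminorm (in fact an absolute value) on k[T] bounded by the trivial absolute value on k, and for P ≠ 0: η_r(P) = r^{deg P} if r > 1, and η_r(P) = r^{v_T(P)} if 0 < r < 1, where v_T(P) is the T-adic valuation of P. -/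
open Classical in
/-- The trivial absolute value on a field: `0 ↦ 0`, nonzero `↦ 1`. -/
noncomputable def trivAbs {k : Type*} [Field k] (a : k) : ℝ := if a = 0 then 0 else 1

open Classical in
/-- The Gauss-type point `η_r` on `k[T]` over the trivially valued field:
`η_r(Σ aᵢ Tⁱ) = max_i |aᵢ|₀ rⁱ`, i.e. the maximum of `rⁱ` over the support. -/
noncomputable def eta {k : Type*} [Field k] (r : ℝ) (P : Polynomial k) : ℝ :=
  if h : P = 0 then 0
  else P.support.sup' (Polynomial.nonempty_support_iff.mpr h) (fun i => r ^ i)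

lemma eta_of_one_le {k : Type*} [Field k] {r : ℝ} (hr : 0 < r) (hr1 : 1 ≤ r)
    {P : Polynomial k} (hP : P ≠ 0) : eta r P = r ^ P.natDegree := by
  rw [eta, dif_neg hP]
  apply le_antisymm
  · exact Finset.sup'_le _ _ fun i hi =>
      pow_le_pow_right₀ hr1 (Polynomial.le_natDegree_of_mem_supp i hi)
  · exact Finset.le_sup' _ (Polynomial.natDegree_mem_support_of_nonzero hP)

lemma eta_of_le_one {k : Type*} [Field k] {r : ℝ} (hr : 0 < r) (hr1 : r ≤ 1)
    {P : Polynomial k} (hP : P ≠ 0) : eta r P = r ^ P.natTrailingDegree := by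
  rw [eta, dif_neg hP]
  apply le_antisymm
  · exact Finset.sup'_le _ _ fun i hi =>
      pow_le_pow_of_le_one hr.le hr1 (Polynomial.natTrailingDegree_le_of_mem_supp i hi)
  · exact Finset.le_sup' _ (Polynomial.natTrailingDegree_mem_support_of_nonzero hP)

lemma eta_pos {k : Type*} [Field k] {r : ℝ} (hr : 0 < r) {P : Polynomial k} (hP : P ≠ 0) :
    0 < eta r P := by
  rcases le_total 1 r with h | h
  · rw [eta_of_one_le hr h hP]; exact pow_pos hr _
  · rw [eta_of_le_one hr h hP]; exact pow_pos hr _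

lemma eta_nonneg {k : Type*} [Field k] {r : ℝ} (hr : 0 < r) (P : Polynomial k) :
    0 ≤ eta r P := by
  by_cases hP : P = 0
  · simp [hP, eta]
  · exact (eta_pos hr hP).le

/-- `η_r` is a multiplicative seminorm (in fact an absolute value) on `k[T]`
bounded by the trivial absolute value on `k`, and for `P ≠ 0` one has
`η_r(P) = r^{deg P}` if `r > 1` and `η_r(P) = r^{v_T(P)}` if `0 < r < 1`. -/
theorem stmt11 {k : Type*} [Field k] (r : ℝ) (hr : 0 < r) :
    eta r (0 : Polynomial k) = 0 ∧ eta r (1 : Polynomial k) = 1 ∧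
    (∀ P Q : Polynomial k, eta r (P * Q) = eta r P * eta r Q) ∧
    (∀ P Q : Polynomial k, eta r (P + Q) ≤ eta r P + eta r Q) ∧
    (∀ a : k, eta r (Polynomial.C a) ≤ trivAbs a) ∧
    (∀ P : Polynomial k, eta r P = 0 ↔ P = 0) ∧
    (∀ P : Polynomial k, P ≠ 0 → 1 < r → eta r P = r ^ P.natDegree) ∧
    (∀ P : Polynomial k, P ≠ 0 → r < 1 → eta r P = r ^ P.natTrailingDegree) := by
  have hone : eta r (1 : Polynomial k) = 1 := by
    rcases le_total 1 r with h | h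
    · rw [eta_of_one_le hr h one_ne_zero]; simp
    · rw [eta_of_le_one hr h one_ne_zero]; simp
  refine ⟨by simp [eta], hone, ?_, ?_, ?_, ?_, ?_, ?_⟩
  · intro P Q
    by_cases hP : P = 0
    · simp [hP, eta]
    by_cases hQ : Q = 0
    · simp [hQ, eta]
    have hPQ : P * Q ≠ 0 := mul_ne_zero hP hQ
    rcases le_total 1 r with h | h
    · rw [eta_of_one_le hr h hPQ, eta_of_one_le hr h hP, eta_of_one_le hr h hQ,
        Polynomial.natDegree_mul hP hQ, pow_add]
    · rw [eta_of_le_one hr h hPQ, eta_of_le_one hr h hP, eta_of_le_one hr h hQ,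
        Polynomial.natTrailingDegree_mul hP hQ, pow_add]
  · intro P Q
    by_cases hPQ : P + Q = 0
    · rw [hPQ]
      simpa [eta] using add_nonneg (eta_nonneg hr P) (eta_nonneg hr Q)
    rw [eta, dif_neg hPQ]
    apply Finset.sup'_le
    intro i hi
    have hi' := Polynomial.support_add hi
    rcases Finset.mem_union.mp hi' with h | h
    · have hP : P ≠ 0 := fun h0 => by simp [h0] at h
      have : r ^ i ≤ eta r P := by
        rw [eta, dif_neg hP]; exact Finset.le_sup' _ h
      exact le_add_of_le_of_nonneg this (eta_nonneg hr Q)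
    · have hQ : Q ≠ 0 := fun h0 => by simp [h0] at h
      have : r ^ i ≤ eta r Q := by
        rw [eta, dif_neg hQ]; exact Finset.le_sup' _ h
      exact le_add_of_nonneg_of_le (eta_nonneg hr P) this
  · intro a
    by_cases ha : a = 0
    · simp [ha, eta, trivAbs]
    · have hC : (Polynomial.C a : Polynomial k) ≠ 0 := by simpa using ha
      have : eta r (Polynomial.C a) = 1 := by
        rcases le_total 1 r with h | h
        · rw [eta_of_one_le hr h hC]; simp
        · rw [eta_of_le_one hr h hC]; simp
      rw [this, trivAbs, if_neg ha]
  · intro P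
    constructor
    · intro h
      by_contra hP
      exact absurd h (ne_of_gt (eta_pos hr hP))
    · intro h; simp [h, eta]
  · intro P hP h1; exact eta_of_one_le hr h1.le hP
  · intro P hP h1; exact eta_of_le_one hr h1.le hP
end

section
/- The set of multiplicative seminorms x on k[T] bounded by the trivial absolute value on k with x(T) > 1 is exactly {η_r : r > 1}, where η_r(Σ aᵢTⁱ) = max_i(|aᵢ|₀ rⁱ). In other words, a bounded multiplicative seminorm on k[T] over the trivially valued field k satisfying x(T) > 1 is determined by its value on T: x(P) = x(T)^{deg P} for every nonzero polynomial P. -/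
open Polynomial Finset

section Aux

variable {k : Type*} [Field k] (x : Polynomial k → ℝ)
  (hnn : ∀ P, 0 ≤ x P)
  (h0 : x 0 = 0) (h1 : x 1 = 1)
  (hmul : ∀ P Q : Polynomial k, x (P * Q) = x P * x Q)
  (hadd : ∀ P Q : Polynomial k, x (P + Q) ≤ x P + x Q)
  (hbd : ∀ a : k, x (Polynomial.C a) ≤ 1)
  (hX : 1 < x Polynomial.X)

include hadd h0 in
lemma aux_sum {ι : Type*} (s : Finset ι) (f : ι → Polynomial k) :
    x (∑ i ∈ s, f i) ≤ ∑ i ∈ s, x (f i) := by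
  classical
  induction s using Finset.induction with
  | empty => simp [h0]
  | insert _ _ h ih =>
    rw [Finset.sum_insert h, Finset.sum_insert h]
    exact le_trans (hadd _ _) (by linarith)

include hnn h1 hmul hbd in
lemma aux_C {a : k} (ha : a ≠ 0) : x (Polynomial.C a) = 1 := by
  have h := hmul (Polynomial.C a) (Polynomial.C a⁻¹)
  rw [← Polynomial.C_mul, mul_inv_cancel₀ ha, Polynomial.C_1, h1] at h
  have h2 := hbd a
  have h3 := hbd a⁻¹
  have h4 := hnn (Polynomial.C a)
  nlinarith

include h1 hmul in
lemma aux_pow (P : Polynomial k) (m : ℕ) : x (P ^ m) = x P ^ m := by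
  induction m with
  | zero => simpa using h1
  | succ n ih => rw [pow_succ, pow_succ, hmul, ih]

include hnn h1 hmul hbd in
lemma aux_neg (P : Polynomial k) : x (-P) = x P := by
  have : (-P) = Polynomial.C (-1 : k) * P := by ring_nf; simp
  rw [this, hmul, aux_C x hnn h1 hmul hbd (by norm_num : (-1 : k) ≠ 0), one_mul]

include hnn h0 h1 hmul hadd hbd hX in
lemma aux_coarse (P : Polynomial k) :
    x P ≤ (P.natDegree + 1) * x Polynomial.X ^ P.natDegree := by
  set r := x Polynomial.X with hr
  have hr1 : (1 : ℝ) ≤ r := le_of_lt hX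
  have hr0 : (0 : ℝ) < r := lt_of_lt_of_le one_pos hr1
  set n := P.natDegree with hn
  have hP : P = ∑ i ∈ Finset.range (n + 1), Polynomial.C (P.coeff i) * Polynomial.X ^ i := by
    conv_lhs => rw [P.as_sum_range' (n + 1) (Nat.lt_succ_self n)]
    exact Finset.sum_congr rfl fun i _ => (Polynomial.C_mul_X_pow_eq_monomial).symm
  calc x P = x (∑ i ∈ Finset.range (n + 1), Polynomial.C (P.coeff i) * Polynomial.X ^ i) := by
        rw [← hP]
    _ ≤ ∑ i ∈ Finset.range (n + 1), x (Polynomial.C (P.coeff i) * Polynomial.X ^ i) :=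
        aux_sum x h0 hadd _ _
    _ ≤ ∑ i ∈ Finset.range (n + 1), r ^ n := by
        apply Finset.sum_le_sum
        intro i hi
        rw [hmul, aux_pow x h1 hmul]
        have h2 : x (Polynomial.C (P.coeff i)) * r ^ i ≤ 1 * r ^ i :=
          mul_le_mul_of_nonneg_right (hbd _) (by positivity)
        have h3 : r ^ i ≤ r ^ n :=
          pow_le_pow_right₀ hr1 (Nat.lt_succ_iff.mp (Finset.mem_range.mp hi))
        linarith
    _ = (n + 1) * r ^ n := by
        rw [Finset.sum_const, Finset.card_range]; push_cast; ring

include hnn h0 h1 hmul hadd hbd hX in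
lemma aux_upper (P : Polynomial k) : x P ≤ x Polynomial.X ^ P.natDegree := by
  set r := x Polynomial.X with hr
  have hr1 : (1 : ℝ) ≤ r := le_of_lt hX
  have hr0 : (0 : ℝ) < r := lt_of_lt_of_le one_pos hr1
  set n := P.natDegree with hn
  by_contra hcon
  push_neg at hcon
  have hrn : (0 : ℝ) < r ^ n := by positivity
  -- for every m, (x P)^m ≤ (m*n+1) * r^(m*n)
  have key : ∀ m : ℕ, (x P) ^ m ≤ ((m : ℝ) * n + 1) * (r ^ n) ^ m := by
    intro m
    have h2 := aux_coarse x hnn h0 h1 hmul hadd hbd hX (P ^ m)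
    rw [aux_pow x h1 hmul, Polynomial.natDegree_pow, ← hn] at h2
    calc (x P) ^ m ≤ ((m * n : ℕ) + 1 : ℝ) * r ^ (m * n) := by exact_mod_cast h2
      _ = ((m : ℝ) * n + 1) * (r ^ n) ^ m := by rw [← pow_mul]; push_cast; ring_nf
  set t : ℝ := x P / r ^ n with ht
  have ht1 : 1 < t := (one_lt_div hrn).mpr hcon
  have htm : ∀ m : ℕ, t ^ m ≤ (m : ℝ) * n + 1 := by
    intro m
    have := key m
    rw [ht, div_pow]
    rw [div_le_iff₀ (by positivity)]
    linarith [this]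
  set ε : ℝ := t - 1 with hε
  have hε0 : 0 < ε := by simp [hε]; linarith
  obtain ⟨m, hm⟩ := exists_nat_gt ((2 * (n : ℝ) + 1) / ε ^ 2)
  have hm2 : 2 * (n : ℝ) + 1 < m * ε ^ 2 := by
    rw [div_lt_iff₀ (by positivity)] at hm; linarith
  have hm1 : (1 : ℝ) ≤ m := by
    by_contra h
    push_neg at h
    have : (m : ℝ) = 0 := by
      have := Nat.lt_one_iff.mp (by exact_mod_cast h)
      simp [this]
    rw [this] at hm2; simp at hm2; nlinarith [Nat.cast_nonneg (α := ℝ) n]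
  -- Bernoulli: t^m ≥ 1 + m ε
  have hB : 1 + (m : ℝ) * ε ≤ t ^ m := by
    have := one_add_mul_le_pow (a := ε) (by linarith) m
    simpa [hε] using this
  have h2m := htm (2 * m)
  have hpow : t ^ (2 * m) = (t ^ m) ^ 2 := by rw [← pow_mul, mul_comm]
  rw [hpow] at h2m
  push_cast at h2m
  have hA : (0 : ℝ) < (m : ℝ) := by linarith
  have h5 : (m : ℝ) * (2 * n + 1) < (m : ℝ) * ((m : ℝ) * ε ^ 2) :=
    mul_lt_mul_of_pos_left hm2 hA
  nlinarith [mul_self_le_mul_self (by positivity : (0:ℝ) ≤ 1 + (m : ℝ) * ε) hB, h5,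
    mul_pos hA hε0]

end Aux

/-- A multiplicative seminorm `x` on `k[T]`, bounded by the trivial absolute
value on `k` and with `x(T) > 1`, is determined by its value on `T`:
`x(P) = x(T)^{deg P}` for every nonzero `P`.  These are exactly the points
`η_r` with `r > 1` forming the valuative boundary of the affine line. -/
theorem stmt12 {k : Type*} [Field k] (x : Polynomial k → ℝ)
    (hnn : ∀ P, 0 ≤ x P)
    (h0 : x 0 = 0) (h1 : x 1 = 1)
    (hmul : ∀ P Q : Polynomial k, x (P * Q) = x P * x Q)
    (hadd : ∀ P Q : Polynomial k, x (P + Q) ≤ x P + x Q)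
    (hbd : ∀ a : k, x (Polynomial.C a) ≤ 1)
    (hX : 1 < x Polynomial.X) :
    ∀ P : Polynomial k, P ≠ 0 → x P = x Polynomial.X ^ P.natDegree := by
  intro P hP
  set r := x Polynomial.X with hr
  have hr1 : (1 : ℝ) ≤ r := le_of_lt hX
  have hr0 : (0 : ℝ) < r := lt_of_lt_of_le one_pos hr1
  set n := P.natDegree with hn
  have hup := aux_upper x hnn h0 h1 hmul hadd hbd hX P
  rw [← hn, ← hr] at hup
  rcases Nat.eq_zero_or_pos n with hn0 | hn1
  · -- constant polynomial
    rw [hn0, pow_zero]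
    have hd : P.natDegree = 0 := by omega
    have hPC : P = Polynomial.C (P.coeff 0) := Polynomial.eq_C_of_natDegree_eq_zero hd
    rw [hPC]
    exact aux_C x hnn h1 hmul hbd (fun h => hP (by rw [hPC, h, map_zero]))
  · refine le_antisymm hup ?_
    by_contra hcon
    push_neg at hcon
    have hrn : (0 : ℝ) < r ^ n := by positivity
    -- lower bound: for m ≥ 1, (x P)^m ≥ r^{mn}(1 - 1/r)
    have key : ∀ m : ℕ, 1 ≤ m → (r ^ n) ^ m * (1 - r⁻¹) ≤ (x P) ^ m := by
      intro m hm
      set Q := P ^ m with hQ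
      have hQ0 : Q ≠ 0 := pow_ne_zero m hP
      have hQd : Q.natDegree = m * n := by rw [hQ, Polynomial.natDegree_pow, hn]
      have hmn1 : 1 ≤ m * n := Nat.one_le_iff_ne_zero.mpr (by positivity)
      have hsplit := Q.eraseLead_add_C_mul_X_pow
      have hlc : Q.leadingCoeff ≠ 0 := Polynomial.leadingCoeff_ne_zero.mpr hQ0
      have hCX : x (Polynomial.C Q.leadingCoeff * Polynomial.X ^ Q.natDegree)
          = r ^ (m * n) := by
        rw [hmul, aux_pow x h1 hmul, aux_C x hnn h1 hmul hbd hlc, one_mul, hQd]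
      have hE : x Q.eraseLead * r ≤ r ^ (m * n) := by
        have h2 := aux_upper x hnn h0 h1 hmul hadd hbd hX Q.eraseLead
        rw [← hr] at h2
        have h3 : Q.eraseLead.natDegree + 1 ≤ m * n := by
          have := Q.eraseLead_natDegree_le
          omega
        calc x Q.eraseLead * r ≤ r ^ Q.eraseLead.natDegree * r :=
              mul_le_mul_of_nonneg_right h2 (le_of_lt hr0)
          _ = r ^ (Q.eraseLead.natDegree + 1) := by rw [pow_succ]
          _ ≤ r ^ (m * n) := pow_le_pow_right₀ hr1 h3
      have htri : r ^ (m * n) ≤ x Q + x Q.eraseLead := by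
        have heq : Polynomial.C Q.leadingCoeff * Polynomial.X ^ Q.natDegree
            = Q + (- Q.eraseLead) := by
          linear_combination hsplit
        calc r ^ (m * n) = x (Polynomial.C Q.leadingCoeff * Polynomial.X ^ Q.natDegree) :=
              hCX.symm
          _ = x (Q + (- Q.eraseLead)) := by rw [heq]
          _ ≤ x Q + x (- Q.eraseLead) := hadd _ _
          _ = x Q + x Q.eraseLead := by rw [aux_neg x hnn h1 hmul hbd]
      have hxQ : x Q = (x P) ^ m := aux_pow x h1 hmul P m
      have hrmn : (r ^ n) ^ m = r ^ (m * n) := by rw [← pow_mul, mul_comm]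
      rw [hrmn]
      have hEr : x Q.eraseLead ≤ r ^ (m * n) * r⁻¹ := by
        rw [← div_eq_mul_inv, le_div_iff₀ hr0]; exact hE
      nlinarith [htri]
    set q : ℝ := x P / r ^ n with hq
    have hq1 : q < 1 := (div_lt_one hrn).mpr hcon
    have hq0 : 0 ≤ q := div_nonneg (hnn P) (le_of_lt hrn)
    have hc : (0 : ℝ) < 1 - r⁻¹ := by
      have : r⁻¹ < 1 := inv_lt_one_of_one_lt₀ hX
      linarith
    obtain ⟨m, hm⟩ := exists_pow_lt_of_lt_one hc hq1
    rcases Nat.eq_zero_or_pos m with hm0 | hm1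
    · rw [hm0, pow_zero] at hm; linarith [inv_pos.mpr hr0]
    · have := key m hm1
      have hqm : q ^ m = (x P) ^ m / (r ^ n) ^ m := by rw [hq, div_pow]
      rw [hqm, div_lt_iff₀ (by positivity)] at hm
      nlinarith
end

section
/- Let k be a field and x a non-Archimedean multiplicative seminorm on k[T] with x(a) ≤ 1 for all a ∈ k and 0 < x(T) < 1, whose kernel is zero (x is an absolute value on k[T]) and which has no center in 𝔾_m, meaning x(P) < 1 for all P in the ideal (T). Then x(P) = x(T)^{v_T(P)} for every nonzero P ∈ k[T], i.e. x = η_r with r = x(T) ∈ (0,1). -/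
/-- A non-Archimedean multiplicative absolute value `x` on `k[T]`, bounded by
the trivial absolute value on `k`, with `0 < x(T) < 1`, with zero kernel, and
with no center on `𝔾ₘ` (i.e. `x < 1` on the ideal `(T)`), satisfies
`x(P) = x(T)^{v_T(P)}` for every nonzero `P`; i.e. `x = η_r` with
`r = x(T) ∈ (0,1)`. -/
theorem stmt13 {k : Type*} [Field k] (x : Polynomial k → ℝ)
    (hnn : ∀ P, 0 ≤ x P)
    (h0 : x 0 = 0) (h1 : x 1 = 1)
    (hmul : ∀ P Q : Polynomial k, x (P * Q) = x P * x Q)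
    (hadd : ∀ P Q : Polynomial k, x (P + Q) ≤ max (x P) (x Q))
    (hbd : ∀ a : k, x (Polynomial.C a) ≤ 1)
    (hker : ∀ P : Polynomial k, P ≠ 0 → x P ≠ 0)
    (hX0 : 0 < x Polynomial.X) (hX1 : x Polynomial.X < 1)
    (hcen : ∀ P ∈ Ideal.span {(Polynomial.X : Polynomial k)}, x P < 1) :
    ∀ P : Polynomial k, P ≠ 0 → x P = x Polynomial.X ^ P.natTrailingDegree := by
  -- x of powers
  have hpow : ∀ n : ℕ, ∀ P : Polynomial k, x (P ^ n) = x P ^ n := by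
    intro n P
    induction n with
    | zero => simpa using h1
    | succ m ih => rw [pow_succ, pow_succ, hmul, ih]
  -- x(C a) = 1 for a ≠ 0
  have hCa : ∀ a : k, a ≠ 0 → x (Polynomial.C a) = 1 := by
    intro a ha
    have h2 : x (Polynomial.C a) * x (Polynomial.C a⁻¹) = 1 := by
      rw [← hmul, ← Polynomial.C_mul, mul_inv_cancel₀ ha, Polynomial.C_1, h1]
    have := hbd a
    have := hbd a⁻¹
    have := hnn (Polynomial.C a)
    have := hnn (Polynomial.C a⁻¹)
    nlinarith
  -- key: constant coeff nonzero implies x = 1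
  have hQ1 : ∀ Q : Polynomial k, Q.coeff 0 ≠ 0 → x Q = 1 := by
    intro Q hQ
    set a := Q.coeff 0
    have hdec : Polynomial.X * Q.divX + Polynomial.C a = Q := Polynomial.X_mul_divX_add Q
    have hmem : (Polynomial.X * Q.divX : Polynomial k) ∈
        Ideal.span {(Polynomial.X : Polynomial k)} := by
      exact Ideal.mem_span_singleton.mpr ⟨Q.divX, rfl⟩
    have hlt : x (Polynomial.X * Q.divX) < 1 := hcen _ hmem
    have hca : x (Polynomial.C a) = 1 := hCa a hQ
    -- upper bound
    have hle : x Q ≤ 1 := by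
      calc x Q = x (Polynomial.X * Q.divX + Polynomial.C a) := by rw [hdec]
        _ ≤ max (x (Polynomial.X * Q.divX)) (x (Polynomial.C a)) := hadd _ _
        _ ≤ 1 := by rw [hca]; exact max_le (le_of_lt hlt) le_rfl
    -- lower bound
    have hneg : x (-(Polynomial.X * Q.divX)) = x (Polynomial.X * Q.divX) := by
      have hm1 : x (-1 : Polynomial k) = 1 := by
        have : x ((-1 : Polynomial k) * (-1)) = 1 := by norm_num [h1]
        rw [hmul] at this
        nlinarith [hnn (-1 : Polynomial k)]
      calc x (-(Polynomial.X * Q.divX)) = x ((-1) * (Polynomial.X * Q.divX)) := by ring_nf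
        _ = 1 * x (Polynomial.X * Q.divX) := by rw [hmul, hm1]
        _ = _ := one_mul _
    have hge : (1 : ℝ) ≤ x Q := by
      have key : x (Polynomial.C a) ≤ max (x Q) (x (-(Polynomial.X * Q.divX))) := by
        have heq : Polynomial.C a = Q + -(Polynomial.X * Q.divX) := by
          linear_combination hdec
        rw [heq]; exact hadd _ _
      rw [hca, hneg] at key
      rcases max_cases (x Q) (x (Polynomial.X * Q.divX)) with ⟨he, _⟩ | ⟨he, _⟩ <;>
        rw [he] at key <;> linarith
    linarith
  intro P hP
  set v := P.natTrailingDegree with hv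
  obtain ⟨Q, hPQ⟩ : (Polynomial.X : Polynomial k) ^ v ∣ P :=
    Polynomial.X_pow_dvd_iff.mpr fun d hd =>
      Polynomial.coeff_eq_zero_of_lt_natTrailingDegree (hv ▸ hd)
  have hQ0 : Q.coeff 0 ≠ 0 := by
    have hc : P.coeff v = Q.coeff 0 := by
      rw [hPQ]; simpa using Polynomial.coeff_X_pow_mul Q v 0
    rw [← hc, hv]
    exact Polynomial.trailingCoeff_nonzero_iff_nonzero.mpr hP
  calc x P = x (Polynomial.X ^ v) * x Q := by rw [hPQ, hmul]
    _ = x Polynomial.X ^ v * 1 := by rw [hpow, hQ1 Q hQ0]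
    _ = _ := mul_one _
end

section
/- Let k be a field with a non-trivial absolute value |·| and let n ≥ 1. Let Φ denote the flow on the hybrid affine space: Φ(x,α) = x^α for x a multiplicative seminorm on k[T₁,…,Tₙ] bounded by ‖·‖_hyb and α ∈ I*_x. Then Φ is continuous and open: for every x, α in the domain and every basic open neighborhood W of (x,α) of the form {y : rᵢ < y(Pᵢ) < sᵢ, i=1..m} × (β,γ) intersected with the domain, Φ(W) contains a basic open neighborhood of x^α of the form {z : rᵢ' < z(Pᵢ) < sᵢ'} (intersected with a condition on the projection ε(z) when α < 1). -/
/-- A multiplicative seminorm on `k[T₁,…,Tₙ]` bounded by the hybrid norm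
`max(|·|₀, |·|)` on `k`, i.e. a point of the hybrid affine space `𝔸ⁿ_hyb`. -/
def IsBddSeminorm {k : Type*} [Field k] (f : AbsoluteValue k ℝ) (n : ℕ)
    (x : MvPolynomial (Fin n) k → ℝ) : Prop :=
  (∀ P, 0 ≤ x P) ∧ x 0 = 0 ∧ x 1 = 1 ∧
  (∀ P Q, x (P * Q) = x P * x Q) ∧
  (∀ P Q, x (P + Q) ≤ x P + x Q) ∧
  (∀ a : k, x (MvPolynomial.C a) ≤ max (trivAbs a) (f a))

/-- The hybrid affine space, with the coarsest topology making `x ↦ x(P)`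
continuous for every polynomial `P` (induced from the product topology). -/
def HybAffine {k : Type*} [Field k] (f : AbsoluteValue k ℝ) (n : ℕ) : Type _ :=
  {x : MvPolynomial (Fin n) k → ℝ // IsBddSeminorm f n x}

instance {k : Type*} [Field k] (f : AbsoluteValue k ℝ) (n : ℕ) :
    TopologicalSpace (HybAffine f n) :=
  instTopologicalSpaceSubtype

/-- The domain of the flow: pairs `(x, α)` with `α ∈ I*_x`, i.e. `α > 0` and
`x^α` again a bounded multiplicative seminorm. -/
def FlowDom {k : Type*} [Field k] (f : AbsoluteValue k ℝ) (n : ℕ) :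
    Set (HybAffine f n × ℝ) :=
  {p | 0 < p.2 ∧ IsBddSeminorm f n fun P => p.1.1 P ^ p.2}

/-- The flow `Φ(x, α) = x^α`. -/
noncomputable def flow {k : Type*} [Field k] (f : AbsoluteValue k ℝ) (n : ℕ)
    (p : FlowDom f n) : HybAffine f n :=
  ⟨fun P => p.1.1.1 P ^ p.1.2, p.2.2⟩

namespace Stmt19Aux
open MvPolynomial Real Filter Topology

variable {k : Type*} [Field k] {f : AbsoluteValue k ℝ} {n : ℕ}
variable {x : MvPolynomial (Fin n) k → ℝ}

open MvPolynomial Real Filter Topology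

variable {k : Type*} [Field k] {f : AbsoluteValue k ℝ} {n : ℕ}
variable {x : MvPolynomial (Fin n) k → ℝ}

lemma trivAbs_ne {a : k} (ha : a ≠ 0) : trivAbs a = 1 := by simp [trivAbs, ha]

lemma x_pow (hx : IsBddSeminorm f n x) (P : MvPolynomial (Fin n) k) (m : ℕ) :
    x (P ^ m) = x P ^ m := by
  induction m with
  | zero => simpa using hx.2.2.1
  | succ m ih => rw [pow_succ, pow_succ, hx.2.2.2.1, ih]

lemma xC_mul (hx : IsBddSeminorm f n x) (a b : k) :
    x (C (a * b)) = x (C a) * x (C b) := by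
  rw [map_mul, hx.2.2.2.1]

lemma xC_mul_inv (hx : IsBddSeminorm f n x) {a : k} (ha : a ≠ 0) :
    x (C a) * x (C a⁻¹) = 1 := by
  rw [← xC_mul hx, mul_inv_cancel₀ ha, map_one, hx.2.2.1]

lemma xC_pos (hx : IsBddSeminorm f n x) {a : k} (ha : a ≠ 0) : 0 < x (C a) := by
  rcases lt_or_eq_of_le (hx.1 (C a)) with h | h
  · exact h
  · exfalso
    have := xC_mul_inv hx ha
    rw [← h, zero_mul] at this; norm_num at this

lemma xC_le (hx : IsBddSeminorm f n x) {a : k} (ha : a ≠ 0) :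
    x (C a) ≤ max 1 (f a) := by
  have := hx.2.2.2.2.2 a
  rwa [trivAbs_ne ha] at this

lemma one_le_xC (hx : IsBddSeminorm f n x) {a : k} (ha : 1 < f a) :
    1 ≤ x (C a) := by
  have ha0 : a ≠ 0 := by
    intro h; rw [h] at ha; simp at ha; linarith
  have h1 : x (C a⁻¹) ≤ 1 := by
    have := xC_le hx (inv_ne_zero ha0)
    rw [show f a⁻¹ = (f a)⁻¹ from map_inv₀ f a] at this
    rwa [max_eq_left (inv_le_one_of_one_le₀ ha.le)] at this
  have h2 := xC_mul_inv hx ha0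
  have h3 := xC_pos hx (inv_ne_zero ha0)
  nlinarith [xC_pos hx ha0]

lemma fa_le (hx : IsBddSeminorm f n x) {a : k} (ha : 1 ≤ f a) : x (C a) ≤ f a := by
  have ha0 : a ≠ 0 := by
    intro h; rw [h] at ha; simp at ha; linarith
  have := xC_le hx ha0
  rwa [max_eq_right ha] at this

lemma x_sum (hx : IsBddSeminorm f n x) {ι : Type*} (s : Finset ι)
    (g : ι → MvPolynomial (Fin n) k) : x (∑ i ∈ s, g i) ≤ ∑ i ∈ s, x (g i) := by
  classical
  induction s using Finset.cons_induction with
  | empty => simp [hx.2.1]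
  | cons a s ha ih =>
    rw [Finset.sum_cons, Finset.sum_cons]
    exact (hx.2.2.2.2.1 _ _).trans (by linarith)

lemma f_nat (m : ℕ) : f (m : k) ≤ (m : ℝ) := by
  induction m with
  | zero => simp
  | succ m ih =>
    push_cast
    calc f ((m : k) + 1) ≤ f (m : k) + f 1 := f.add_le _ _
    _ ≤ (m : ℝ) + 1 := by rw [f.map_one]; linarith


lemma select19 {A B u v : ℝ} (hA : 0 < A) (hB : 0 < B) (hv : 0 ≤ v)
    (hlt : v * A < u * B) :
    ∃ p q : ℕ, 0 < q ∧ (q : ℝ) * A ≤ (p : ℝ) * B ∧ (p : ℝ) * v < (q : ℝ) * u := by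
  rcases eq_or_lt_of_le hv with hv0 | hv0
  · have hu : 0 < u := by nlinarith
    refine ⟨⌈A / B⌉₊, 1, one_pos, ?_, ?_⟩
    · have h1 : A / B ≤ (⌈A / B⌉₊ : ℝ) := Nat.le_ceil _
      rw [div_le_iff₀ hB] at h1
      push_cast; linarith
    · rw [← hv0]; push_cast; linarith
  · have h1 : A / B < u / v := by
      rw [div_lt_div_iff₀ hB hv0]; nlinarith
    obtain ⟨r, hr1, hr2⟩ := exists_rat_btwn h1
    have hrpos : (0:ℝ) < (r:ℝ) := lt_trans (by positivity) hr1
    have hnum : 0 < r.num := Rat.num_pos.2 (by exact_mod_cast hrpos)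
    have hq : (0:ℝ) < (r.den : ℝ) := by exact_mod_cast r.pos
    have hcast : (r : ℝ) = ((r.num.toNat : ℝ)) / (r.den : ℝ) := by
      rw [Rat.cast_def]; congr 1; exact_mod_cast (Int.toNat_of_nonneg hnum.le).symm
    refine ⟨r.num.toNat, r.den, r.pos, ?_, ?_⟩
    · rw [hcast, div_lt_div_iff₀ hB hq] at hr1
      linarith
    · rw [hcast, div_lt_div_iff₀ hq hv0] at hr2
      linarith

lemma key19 (hx : IsBddSeminorm f n x) {a b : k} (ha : 1 < f a) (hb : 1 < f b) :
    log (x (C a)) * log (f b) ≤ log (x (C b)) * log (f a) := by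
  by_contra hcon
  push_neg at hcon
  have ha0 : a ≠ 0 := fun h => by rw [h] at ha; simp at ha; linarith
  have hb0 : b ≠ 0 := fun h => by rw [h] at hb; simp at hb; linarith
  have hA : 0 < log (f a) := log_pos ha
  have hB : 0 < log (f b) := log_pos hb
  have hv : 0 ≤ log (x (C b)) := log_nonneg (one_le_xC hx hb)
  obtain ⟨p, q, hq, h1, h2⟩ := select19 hA hB hv hcon
  -- the element c = a^q / b^p
  set c : k := a ^ q * (b ^ p)⁻¹ with hc
  have hc0 : c ≠ 0 := by
    apply mul_ne_zero (pow_ne_zero _ ha0) (inv_ne_zero (pow_ne_zero _ hb0))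
  have hfa : 0 < f a := lt_trans one_pos ha
  have hfb : 0 < f b := lt_trans one_pos hb
  have hxa : 0 < x (C a) := xC_pos hx ha0
  have hxb : 0 < x (C b) := xC_pos hx hb0
  -- f c ≤ 1
  have hfc : f c ≤ 1 := by
    have h3 : f a ^ q ≤ f b ^ p := by
      rw [← Real.exp_log (pow_pos hfa q), ← Real.exp_log (pow_pos hfb p),
        Real.log_pow, Real.log_pow]
      apply Real.exp_le_exp.2
      push_cast; linarith
    rw [hc, f.map_mul, map_inv₀, f.map_pow, f.map_pow]
    have h5 : (0:ℝ) < f b ^ p := pow_pos hfb p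
    have h6 := mul_le_mul_of_nonneg_right h3 (inv_nonneg.2 h5.le)
    rwa [mul_inv_cancel₀ h5.ne'] at h6
  -- x (C c) > 1
  have hxc : 1 < x (C c) := by
    have h3 : x (C b) ^ p < x (C a) ^ q := by
      rw [← Real.exp_log (pow_pos hxb p), ← Real.exp_log (pow_pos hxa q),
        Real.log_pow, Real.log_pow]
      apply Real.exp_lt_exp.2
      push_cast; linarith
    have e1 : x (C c) = x (C (a ^ q)) * x (C ((b ^ p)⁻¹)) := by
      rw [hc, xC_mul hx]
    have e2 : x (C (a ^ q)) = x (C a) ^ q := by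
      rw [map_pow, x_pow hx]
    have e3 : x (C ((b ^ p)⁻¹)) = (x (C b) ^ p)⁻¹ := by
      have h4 := xC_mul_inv hx (pow_ne_zero p hb0)
      rw [map_pow, x_pow hx] at h4
      exact eq_inv_of_mul_eq_one_left (by linarith [h4])
    rw [e1, e2, e3, ← div_eq_mul_inv]
    exact (one_lt_div (pow_pos hxb p)).2 h3
  have := xC_le hx hc0
  rw [max_eq_left hfc] at this
  linarith


lemma exists_exponent (hx : IsBddSeminorm f n x) {a₀ : k} (h₀ : 1 < f a₀) :
    ∃ t : ℝ, 0 ≤ t ∧ t ≤ 1 ∧ x (C a₀) = f a₀ ^ t ∧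
      ∀ a : k, a ≠ 0 → x (C a) = f a ^ t := by
  have ha₀0 : a₀ ≠ 0 := fun h => by rw [h] at h₀; simp at h₀; linarith
  have hA₀ : 0 < log (f a₀) := log_pos h₀
  have hx₀ : 0 < x (C a₀) := xC_pos hx ha₀0
  set t : ℝ := log (x (C a₀)) / log (f a₀) with ht
  have ht0 : 0 ≤ t := div_nonneg (log_nonneg (one_le_xC hx h₀)) hA₀.le
  have ht1 : t ≤ 1 := by
    rw [ht, div_le_one hA₀]
    exact Real.log_le_log hx₀ (fa_le hx h₀.le)
  -- main: for every a with 1 < f a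
  have main : ∀ a : k, 1 < f a → x (C a) = f a ^ t := by
    intro a ha
    have ha0 : a ≠ 0 := fun h => by rw [h] at ha; simp at ha; linarith
    have h1 := key19 hx ha h₀
    have h2 := key19 hx h₀ ha
    have heq : log (x (C a)) = t * log (f a) := by
      rw [ht]
      field_simp
      linarith
    have hxa : 0 < x (C a) := xC_pos hx ha0
    rw [← Real.exp_log hxa, heq, Real.rpow_def_of_pos (lt_trans one_pos ha),
      mul_comm]
  refine ⟨t, ht0, ht1, main a₀ h₀, ?_⟩
  intro a ha0
  rcases lt_trichotomy (f a) 1 with h | h | h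
  · have hfa : 0 < f a := f.pos ha0
    have hinv : 1 < f a⁻¹ := by
      rw [map_inv₀]
      exact (one_lt_inv₀ hfa).2 h
    have h5 := main a⁻¹ hinv
    have h6 := xC_mul_inv hx ha0
    rw [h5] at h6
    rw [map_inv₀] at h6
    rw [Real.inv_rpow hfa.le, mul_inv_eq_one₀ (Real.rpow_pos_of_pos hfa t).ne'] at h6
    exact h6
  · have h5 : x (C a) = 1 := by
      have l1 : x (C a) ≤ 1 := by
        have := xC_le hx ha0; rw [h, max_self] at this; exact this
      have l2 : x (C a⁻¹) ≤ 1 := by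
        have := xC_le hx (inv_ne_zero ha0)
        rw [show f a⁻¹ = (f a)⁻¹ from map_inv₀ f a, h] at this
        simpa using this
      have l3 := xC_mul_inv hx ha0
      nlinarith [xC_pos hx ha0, xC_pos hx (inv_ne_zero ha0)]
    rw [h5, h, Real.one_rpow]
  · exact main a h


lemma triangle_rpow (hx : IsBddSeminorm f n x) {t β : ℝ} (ht : 0 ≤ t)
    (hC : ∀ a : k, a ≠ 0 → x (C a) = f a ^ t)
    (hβ : 0 < β) (htβ : t * β ≤ 1) (P Q : MvPolynomial (Fin n) k) :
    x (P + Q) ^ β ≤ x P ^ β + x Q ^ β := by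
  have hxnn := hx.1
  set D : ℝ := x P ^ β + x Q ^ β with hD
  have hDnn : 0 ≤ D := by
    have h1 := Real.rpow_nonneg (hxnn P) β
    have h2 := Real.rpow_nonneg (hxnn Q) β
    linarith
  have hnat : ∀ c : ℕ, 0 < c → x ((c : MvPolynomial (Fin n) k)) ^ β ≤ (c : ℝ) := by
    intro c hc
    have h1 : (1:ℝ) ≤ (c:ℝ) := by exact_mod_cast hc
    rw [show ((c : ℕ) : MvPolynomial (Fin n) k) = C ((c : k)) from (map_natCast C c).symm]
    by_cases h0 : (c : k) = 0
    · rw [h0, map_zero, hx.2.1, Real.zero_rpow hβ.ne']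
      linarith
    · rw [hC _ h0, ← Real.rpow_mul (f.nonneg _)]
      calc f ((c:ℕ):k) ^ (t*β) ≤ (c:ℝ) ^ (t*β) :=
            Real.rpow_le_rpow (f.nonneg _) (f_nat c) (by positivity)
      _ ≤ (c:ℝ) ^ (1:ℝ) := Real.rpow_le_rpow_of_exponent_le h1 htβ
      _ = (c:ℝ) := Real.rpow_one _
  have main : ∀ m : ℕ, (x (P + Q) ^ β) ^ m ≤ ((m:ℝ) + 1) ^ β * D ^ m := by
    intro m
    set g : ℕ → ℝ := fun i =>
      x (P ^ i * Q ^ (m - i) * ((m.choose i : ℕ) : MvPolynomial (Fin n) k)) with hg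
    have hsum : x ((P + Q) ^ m) ≤ ∑ i ∈ Finset.range (m+1), g i := by
      rw [add_pow]
      exact x_sum hx _ _
    have hgnn : ∀ i, 0 ≤ g i := fun i => hxnn _
    have hne : (Finset.range (m+1)).Nonempty := ⟨0, by simp⟩
    set T : ℝ := (Finset.range (m+1)).sup' hne g with hT
    obtain ⟨i₀, hi₀, hTi⟩ := Finset.exists_mem_eq_sup' hne g
    have hTnn : 0 ≤ T := by rw [hT, hTi]; exact hgnn i₀
    have hsum2 : ∑ i ∈ Finset.range (m+1), g i ≤ ((m:ℝ)+1) * T := by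
      have h1 := Finset.sum_le_card_nsmul (Finset.range (m+1)) g T
        (fun i _ => Finset.le_sup' g (by assumption))
      rw [Finset.card_range, nsmul_eq_mul] at h1
      push_cast at h1
      exact h1
    have hTb : T ^ β ≤ D ^ m := by
      have hi₀m : i₀ ≤ m := by have := Finset.mem_range.1 hi₀; omega
      have hchoose : (0:ℝ) < (m.choose i₀ : ℝ) := by
        exact_mod_cast Nat.choose_pos hi₀m
      have hgsplit : g i₀ = x P ^ i₀ * x Q ^ (m - i₀) *
          x ((m.choose i₀ : ℕ) : MvPolynomial (Fin n) k) := by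
        rw [hg]
        dsimp only
        rw [hx.2.2.2.1, hx.2.2.2.1, x_pow hx, x_pow hx]
      have hterm : g i₀ ^ β ≤ (x P ^ β) ^ i₀ * (x Q ^ β) ^ (m - i₀) * (m.choose i₀ : ℝ) := by
        rw [hgsplit, Real.mul_rpow (mul_nonneg (pow_nonneg (hxnn P) _) (pow_nonneg (hxnn Q) _)) (hxnn _),
          Real.mul_rpow (pow_nonneg (hxnn P) _) (pow_nonneg (hxnn Q) _)]
        have e1 : (x P ^ i₀) ^ β = (x P ^ β) ^ i₀ := by
          rw [← Real.rpow_natCast_mul (hxnn P), mul_comm, Real.rpow_mul_natCast (hxnn P)]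
        have e2 : (x Q ^ (m - i₀)) ^ β = (x Q ^ β) ^ (m - i₀) := by
          rw [← Real.rpow_natCast_mul (hxnn Q), mul_comm, Real.rpow_mul_natCast (hxnn Q)]
        rw [e1, e2]
        exact mul_le_mul_of_nonneg_left (hnat _ (Nat.choose_pos hi₀m))
          (mul_nonneg (pow_nonneg (Real.rpow_nonneg (hxnn P) β) _)
            (pow_nonneg (Real.rpow_nonneg (hxnn Q) β) _))
      have hsingle : (x P ^ β) ^ i₀ * (x Q ^ β) ^ (m - i₀) * (m.choose i₀ : ℝ) ≤ D ^ m := by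
        rw [hD, add_pow]
        exact Finset.single_le_sum (f := fun i => (x P ^ β) ^ i * (x Q ^ β) ^ (m - i) * (m.choose i : ℝ))
          (fun i _ => mul_nonneg (mul_nonneg (pow_nonneg (Real.rpow_nonneg (hxnn P) β) _)
            (pow_nonneg (Real.rpow_nonneg (hxnn Q) β) _)) (Nat.cast_nonneg _)) hi₀
      calc T ^ β = g i₀ ^ β := by rw [hT, hTi]
      _ ≤ _ := hterm
      _ ≤ D ^ m := hsingle
    have e3 : (x (P + Q) ^ β) ^ m = x ((P + Q) ^ m) ^ β := by
      rw [x_pow hx, ← Real.rpow_natCast_mul (hxnn _), mul_comm,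
        Real.rpow_mul_natCast (hxnn _)]
    rw [e3]
    calc x ((P + Q) ^ m) ^ β ≤ (((m:ℝ)+1) * T) ^ β := by
          apply Real.rpow_le_rpow (hxnn _) _ hβ.le
          exact le_trans hsum hsum2
    _ = ((m:ℝ)+1) ^ β * T ^ β := Real.mul_rpow (by positivity) hTnn
    _ ≤ ((m:ℝ)+1) ^ β * D ^ m :=
        mul_le_mul_of_nonneg_left hTb (Real.rpow_nonneg (by positivity) β)
  -- conclusion via limits
  rcases eq_or_lt_of_le hDnn with hD0 | hD0
  · have h1 := main 1
    rw [pow_one, ← hD0, pow_one, mul_zero] at h1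
    rw [← hD0]
    exact h1
  · by_contra hcon
    push_neg at hcon
    set c : ℝ := x (P + Q) ^ β with hc
    have hρ1 : 1 < c / D := (one_lt_div hD0).2 hcon
    set ρ : ℝ := c / D with hρ
    have hρ0 : 0 < ρ := lt_trans one_pos hρ1
    set K : ℕ := ⌈β⌉₊ with hK
    have hbound : ∀ m : ℕ, ρ ^ m ≤ ((m:ℝ)+1) ^ K := by
      intro m
      have hm1 : (1:ℝ) ≤ (m:ℝ) + 1 := by
        have : (0:ℝ) ≤ (m:ℝ) := Nat.cast_nonneg m
        linarith
      have h3 : ((m:ℝ)+1) ^ β ≤ ((m:ℝ)+1) ^ K := by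
        rw [← Real.rpow_natCast ((m:ℝ)+1) K]
        exact Real.rpow_le_rpow_of_exponent_le hm1 (Nat.le_ceil β)
      rw [hρ, div_pow, div_le_iff₀ (pow_pos hD0 m)]
      calc c ^ m ≤ ((m:ℝ)+1)^β * D^m := main m
      _ ≤ ((m:ℝ)+1)^K * D^m := mul_le_mul_of_nonneg_right h3 (pow_nonneg hD0.le m)
    have htend : Tendsto (fun m : ℕ => ((m:ℝ)+1) ^ K / ρ ^ m) atTop (𝓝 0) := by
      have h0 := tendsto_pow_const_div_const_pow_of_one_lt K hρ1
      have h1 := h0.comp (tendsto_add_atTop_nat 1)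
      have h2 := h1.const_mul ρ
      rw [mul_zero] at h2
      apply h2.congr
      intro m
      simp only [Function.comp]
      push_cast
      rw [pow_succ]
      field_simp
    have hge : (1:ℝ) ≤ 0 := by
      apply ge_of_tendsto htend
      filter_upwards with m
      rw [one_le_div (pow_pos hρ0 m)]
      exact hbound m
    linarith

lemma rpow_isBddSeminorm (hx : IsBddSeminorm f n x) {t β : ℝ} (ht : 0 ≤ t)
    (hC : ∀ a : k, a ≠ 0 → x (C a) = f a ^ t)
    (hβ : 0 < β) (htβ : t * β ≤ 1) :
    IsBddSeminorm f n (fun P => x P ^ β) := by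
  refine ⟨fun P => Real.rpow_nonneg (hx.1 P) β, ?_, ?_, ?_, ?_, ?_⟩
  · dsimp only; rw [hx.2.1, Real.zero_rpow hβ.ne']
  · dsimp only; rw [hx.2.2.1, Real.one_rpow]
  · intro P Q
    dsimp only
    rw [hx.2.2.2.1, Real.mul_rpow (hx.1 P) (hx.1 Q)]
  · exact fun P Q => triangle_rpow hx ht hC hβ htβ P Q
  · intro a
    dsimp only
    by_cases ha : a = 0
    · subst ha
      rw [map_zero, hx.2.1, Real.zero_rpow hβ.ne']
      have : trivAbs (0:k) = 0 := by simp [trivAbs]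
      rw [this]
      simp [f.nonneg]
    · rw [trivAbs_ne ha, hC a ha, ← Real.rpow_mul (f.nonneg a)]
      rcases le_total (f a) 1 with h | h
      · exact le_trans (Real.rpow_le_one (f.nonneg a) h (by positivity)) (le_max_left _ _)
      · calc f a ^ (t*β) ≤ f a ^ (1:ℝ) := Real.rpow_le_rpow_of_exponent_le h htβ
        _ = f a := Real.rpow_one _
        _ ≤ max 1 (f a) := le_max_right _ _


lemma preimage_seminorm (z : HybAffine f n) {a₀ : k} (h₀ : 1 < f a₀) {α' : ℝ}
    (hα' : 0 < α') (hcond : 1 ≤ α' ∨ z.1 (C a₀) < f a₀ ^ α') :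
    IsBddSeminorm f n (fun P => z.1 P ^ (α'⁻¹ : ℝ)) := by
  obtain ⟨t, ht0, ht1, hta, htC⟩ := exists_exponent z.2 h₀
  have htβ : t * α'⁻¹ ≤ 1 := by
    rcases hcond with h | h
    · calc t * α'⁻¹ ≤ 1 * α'⁻¹ :=
          mul_le_mul_of_nonneg_right ht1 (inv_nonneg.2 hα'.le)
      _ ≤ 1 := by rw [one_mul]; exact inv_le_one_of_one_le₀ h
    · rw [hta] at h
      have hlt : t < α' := (Real.rpow_lt_rpow_left_iff h₀).1 h
      calc t * α'⁻¹ ≤ α' * α'⁻¹ :=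
          mul_le_mul_of_nonneg_right hlt.le (inv_nonneg.2 hα'.le)
      _ = 1 := mul_inv_cancel₀ hα'.ne'
  exact rpow_isBddSeminorm z.2 ht0 htC (inv_pos.2 hα') htβ

end Stmt19Aux

open Stmt19Aux MvPolynomial Real Filter Topology in
/-- For a field `k` with a non-trivial absolute value, the flow on the hybrid
affine space `𝔸ⁿ_hyb` is continuous and open. -/
theorem stmt19 {k : Type*} [Field k] (f : AbsoluteValue k ℝ)
    (hf : ∃ a : k, f a ≠ 0 ∧ f a ≠ 1) (n : ℕ) (hn : 1 ≤ n) :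
    Continuous (flow f n) ∧ IsOpenMap (flow f n) := by
  classical
  obtain ⟨a₀, h₀⟩ : ∃ a₀ : k, 1 < f a₀ := by
    obtain ⟨a, ha0, ha1⟩ := hf
    have ha : a ≠ 0 := fun h => ha0 (by rw [h, map_zero])
    rcases lt_trichotomy (f a) 1 with h | h | h
    · exact ⟨a⁻¹, by rw [map_inv₀]; exact (one_lt_inv₀ (f.pos ha)).2 h⟩
    · exact absurd h ha1
    · exact ⟨a, h⟩
  constructor
  · -- Continuity
    have hc : Continuous fun (p : FlowDom f n) (P : MvPolynomial (Fin n) k) =>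
        p.1.1.1 P ^ p.1.2 := by
      apply continuous_pi
      intro P
      rw [continuous_iff_continuousAt]
      intro p
      have h1 : ContinuousAt (fun q : FlowDom f n => ((q.1.1.1 P : ℝ), q.1.2)) p :=
        (((continuous_apply P).comp (continuous_subtype_val.comp
          (continuous_fst.comp (continuous_subtype_val (p := (· ∈ FlowDom f n)))))).prodMk
          (continuous_snd.comp (continuous_subtype_val (p := (· ∈ FlowDom f n))))).continuousAt
      exact (Real.continuousAt_rpow _ (Or.inr p.2.1)).comp h1
    exact hc.subtype_mk _
  · rw [isOpenMap_iff_nhds_le]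
    rintro ⟨⟨⟨x, hxsem⟩, α⟩, hα, hxα⟩
    intro s hs
    rw [Filter.mem_map] at hs
    refine Filter.mem_of_superset ?_ (Set.image_preimage_subset (flow f n) s)
    set U := flow f n ⁻¹' s with hUdef
    -- extract a basic neighborhood from hs
    rw [nhds_subtype, Filter.mem_comap] at hs
    obtain ⟨Vprod, hVprod, hVprodsub⟩ := hs
    replace hVprod := mem_nhds_prod_iff.1 hVprod
    obtain ⟨V₁, hV₁, V₂, hV₂, hV12⟩ := hVprod
    obtain ⟨W₁, hW₁, hW₁sub⟩ := Filter.mem_comap.1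
      ((nhds_subtype_eq_comap (p := IsBddSeminorm f n) (x := x) (h := hxsem)).ge hV₁)
    rw [nhds_pi, Filter.mem_pi] at hW₁
    obtain ⟨I, hIfin, V, hV, hVsub2⟩ := hW₁
    set O : MvPolynomial (Fin n) k → Set ℝ := fun P => interior (V P) with hOdef
    have hOopen : ∀ P, IsOpen (O P) := fun P => isOpen_interior
    have hxO : ∀ P, x P ∈ O P := fun P => mem_interior_iff_mem_nhds.2 (hV P)
    obtain ⟨tx, htx0, htx1, htxa₀, htxC⟩ := exists_exponent hxsem h₀
    by_cases hcase : 1 ≤ α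
    · -- α ≥ 1 : use α' = α
      set Vt : Set (MvPolynomial (Fin n) k → ℝ) :=
        {w | ∀ P ∈ I, w P ^ (α⁻¹ : ℝ) ∈ O P} with hVt
      have hVtopen : IsOpen Vt := by
        have he : Vt = ⋂ P ∈ I,
            (fun w : MvPolynomial (Fin n) k → ℝ => w P ^ (α⁻¹:ℝ)) ⁻¹' (O P) := by
          ext w; simp [hVt]
        rw [he]
        exact hIfin.isOpen_biInter fun P _ =>
          ((Real.continuous_rpow_const (inv_nonneg.2 hα.le)).comp
            (continuous_apply P)).isOpen_preimage _ (hOopen P)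
      have hmem : (fun P => x P ^ α) ∈ Vt := by
        intro P hP
        dsimp only
        rw [← Real.rpow_mul (hxsem.1 P), mul_inv_cancel₀ hα.ne', Real.rpow_one]
        exact hxO P
      refine Filter.mem_of_superset
        (IsOpen.mem_nhds (hVtopen.preimage continuous_subtype_val) hmem) ?_
      rintro ⟨z, hzsem⟩ hz
      have hy := preimage_seminorm ⟨z, hzsem⟩ h₀ hα (Or.inl hcase)
      set Y : HybAffine f n := ⟨fun P => z P ^ (α⁻¹:ℝ), hy⟩ with hY
      have hYz : (fun P => Y.1 P ^ α) = z := by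
        funext P
        show (z P ^ (α⁻¹:ℝ)) ^ α = z P
        rw [← Real.rpow_mul (hzsem.1 P), inv_mul_cancel₀ hα.ne', Real.rpow_one]
      have hq : (Y, α) ∈ FlowDom f n := ⟨hα, hYz ▸ hzsem⟩
      refine ⟨⟨(Y, α), hq⟩, ?_, ?_⟩
      · apply hVprodsub
        apply hV12
        refine ⟨?_, mem_of_mem_nhds hV₂⟩
        apply hW₁sub
        show Y.1 ∈ W₁
        apply hVsub2
        intro P hP
        exact interior_subset (hz P hP)
      · exact Subtype.ext hYz
    · -- α < 1
      push_neg at hcase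
      have hE : ∀ᶠ b in 𝓝 α, ∀ P ∈ I, x P ^ (α / b) ∈ O P := by
        rw [Filter.eventually_all_finite hIfin]
        intro P hP
        have hc1 : ContinuousAt (fun b : ℝ => ((x P : ℝ), α / b)) α :=
          continuousAt_const.prodMk (continuousAt_const.div continuousAt_id hα.ne')
        have hc2 : ContinuousAt (fun b : ℝ => x P ^ (α / b)) α :=
          (Real.continuousAt_rpow _ (Or.inr (div_pos hα hα))).comp hc1
        have hval : x P ^ (α / α) = x P := by rw [div_self hα.ne', Real.rpow_one]
        exact hc2.eventually_mem ((hOopen P).mem_nhds (by rw [hval]; exact hxO P))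
      have hF : (({b | ∀ P ∈ I, x P ^ (α / b) ∈ O P} ∩ V₂) ∩ Set.Ioo α 1).Nonempty := by
        apply Filter.nonempty_of_mem (f := 𝓝[>] α)
        apply Filter.inter_mem
        · exact mem_nhdsWithin_of_mem_nhds (Filter.inter_mem hE hV₂)
        · exact Ioo_mem_nhdsGT_of_mem ⟨le_refl α, hcase⟩
      obtain ⟨α', ⟨hα'O, hα'V₂⟩, hαα', hα'1⟩ := hF
      have hα'pos : 0 < α' := lt_trans hα hαα'
      set Vt : Set (MvPolynomial (Fin n) k → ℝ) :=
        {w | (∀ P ∈ I, w P ^ (α'⁻¹ : ℝ) ∈ O P) ∧ w (C a₀) < f a₀ ^ α'} with hVt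
      have hVtopen : IsOpen Vt := by
        have he : Vt = (⋂ P ∈ I,
            (fun w : MvPolynomial (Fin n) k → ℝ => w P ^ (α'⁻¹:ℝ)) ⁻¹' (O P)) ∩
            ((fun w : MvPolynomial (Fin n) k → ℝ => w (C a₀)) ⁻¹' Set.Iio (f a₀ ^ α')) := by
          ext w; simp [hVt]
        rw [he]
        apply IsOpen.inter
        · exact hIfin.isOpen_biInter fun P _ =>
            ((Real.continuous_rpow_const (inv_nonneg.2 hα'pos.le)).comp
              (continuous_apply P)).isOpen_preimage _ (hOopen P)
        · exact (continuous_apply (C a₀)).isOpen_preimage _ isOpen_Iio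
      have hmem : (fun P => x P ^ α) ∈ Vt := by
        constructor
        · intro P hP
          dsimp only
          rw [← Real.rpow_mul (hxsem.1 P), ← div_eq_mul_inv]
          exact hα'O P hP
        · show x (C a₀) ^ α < f a₀ ^ α'
          rw [htxa₀, ← Real.rpow_mul (f.nonneg _)]
          apply (Real.rpow_lt_rpow_left_iff h₀).2
          nlinarith
      refine Filter.mem_of_superset
        (IsOpen.mem_nhds (hVtopen.preimage continuous_subtype_val) hmem) ?_
      rintro ⟨z, hzsem⟩ ⟨hz1, hz2⟩
      have hy := preimage_seminorm ⟨z, hzsem⟩ h₀ hα'pos (Or.inr hz2)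
      set Y : HybAffine f n := ⟨fun P => z P ^ (α'⁻¹:ℝ), hy⟩ with hY
      have hYz : (fun P => Y.1 P ^ α') = z := by
        funext P
        show (z P ^ (α'⁻¹:ℝ)) ^ α' = z P
        rw [← Real.rpow_mul (hzsem.1 P), inv_mul_cancel₀ hα'pos.ne', Real.rpow_one]
      have hq : (Y, α') ∈ FlowDom f n := ⟨hα'pos, hYz ▸ hzsem⟩
      refine ⟨⟨(Y, α'), hq⟩, ?_, ?_⟩
      · apply hVprodsub
        apply hV12
        refine ⟨?_, hα'V₂⟩
        apply hW₁sub
        show Y.1 ∈ W₁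
        apply hVsub2
        intro P hP
        exact interior_subset (hz1 P hP)
      · exact Subtype.ext hYz
end
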